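/- For every ε > 0 there exists X > 0 such that for all real x ≥ X, √5 · h(x) ≤ φ^{log₂ 3} · x^{log₂ φ} + ε. -/

import Mathlib

open Real

lemma aux_key_ident (n : ℕ) :
    goldenRatio ^ (logb 2 3) * ((2:ℝ) ^ n / 3) ^ (logb 2 goldenRatio) = goldenRatio ^ n := by
  set α := logb 2 goldenRatio with hα
  have h2 : (2:ℝ) ^ α = goldenRatio := rpow_logb two_pos (by norm_num) goldenRatio_pos
  have h3 : (3:ℝ) ^ α = goldenRatio ^ (logb 2 3) := by
    have h32 : (3:ℝ) ^ α = ((2:ℝ) ^ (logb 2 3)) ^ α := by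
      rw [rpow_logb two_pos (by norm_num) (by norm_num : (0:ℝ) < 3)]
    rw [h32, ← rpow_mul (by norm_num : (0:ℝ) ≤ 2), mul_comm,
      rpow_mul (by norm_num : (0:ℝ) ≤ 2), h2]
  have h2n : ((2:ℝ) ^ n) ^ α = goldenRatio ^ n := by
    rw [← rpow_natCast (2:ℝ) n, ← rpow_mul (by norm_num : (0:ℝ) ≤ 2), mul_comm,
      rpow_mul (by norm_num : (0:ℝ) ≤ 2), h2, rpow_natCast]
  rw [div_rpow (show (0:ℝ) ≤ 2 ^ n by positivity) (by norm_num : (0:ℝ) ≤ 3), h2n, h3]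
  field_simp

lemma aux_alpha_pos : 0 < logb 2 goldenRatio := logb_pos one_lt_two one_lt_goldenRatio

lemma aux_alpha_lt_one : logb 2 goldenRatio < 1 := by
  have := Real.logb_lt_logb (b := 2) one_lt_two goldenRatio_pos goldenRatio_lt_two
  simpa using this

lemma aux_endpoint (n : ℕ) (hn : 1 ≤ n) (m : ℝ) (hm : ((2:ℝ) ^ n - 1) / 3 ≤ m) :
    goldenRatio ^ n - (goldenRatio / 2) ^ n ≤
      goldenRatio ^ (logb 2 3) * m ^ (logb 2 goldenRatio) := by
  set α := logb 2 goldenRatio with hα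
  set c := goldenRatio ^ (logb 2 3) with hc
  have hc0 : 0 < c := rpow_pos_of_pos goldenRatio_pos _
  have h2n : (2:ℝ) ≤ 2 ^ n := by
    calc (2:ℝ) = 2 ^ 1 := (pow_one 2).symm
    _ ≤ 2 ^ n := pow_le_pow_right₀ (by norm_num) hn
  have hhalf : ((1:ℝ)/2) ^ n ≤ 1/2 := by
    calc ((1:ℝ)/2) ^ n ≤ (1/2) ^ 1 := pow_le_pow_of_le_one (by norm_num) (by norm_num) hn
    _ = 1/2 := pow_one _
  have hm0 : (0:ℝ) < ((2:ℝ) ^ n - 1) / 3 := by linarith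
  have h21 : (2:ℝ) ^ n * (1/2) ^ n = 1 := by rw [← mul_pow]; norm_num
  have key : ((2:ℝ) ^ n - 1) / 3 = ((2:ℝ) ^ n / 3) * (1 - (1/2) ^ n) := by
    linear_combination (1/3 : ℝ) * h21
  have step1 : (((2:ℝ) ^ n - 1) / 3) ^ α ≤ m ^ α :=
    rpow_le_rpow hm0.le hm aux_alpha_pos.le
  have step2 : (((2:ℝ) ^ n - 1) / 3) ^ α = ((2:ℝ) ^ n / 3) ^ α * (1 - (1/2) ^ n) ^ α := by
    rw [key, mul_rpow (show (0:ℝ) ≤ 2 ^ n / 3 by positivity) (show (0:ℝ) ≤ 1 - (1/2:ℝ) ^ n by linarith)]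
  have step3 : (1 - ((1:ℝ)/2) ^ n) ≤ (1 - (1/2) ^ n) ^ α := by
    have hp : (0:ℝ) ≤ (1/2:ℝ) ^ n := by positivity
    have := rpow_le_rpow_of_exponent_ge (x := 1 - ((1:ℝ)/2) ^ n) (by linarith)
      (by linarith) aux_alpha_lt_one.le
    rwa [rpow_one] at this
  have hphin : (0:ℝ) < goldenRatio ^ n := pow_pos goldenRatio_pos n
  have hgp : (goldenRatio / 2) ^ n = goldenRatio ^ n * (1/2) ^ n := by
    rw [← mul_pow]; ring_nf
  calc goldenRatio ^ n - (goldenRatio / 2) ^ n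
      = goldenRatio ^ n * (1 - (1/2) ^ n) := by rw [hgp]; ring
    _ ≤ goldenRatio ^ n * (1 - (1/2) ^ n) ^ α :=
        mul_le_mul_of_nonneg_left step3 hphin.le
    _ = c * (((2:ℝ) ^ n / 3) ^ α * (1 - (1/2) ^ n) ^ α) := by
        rw [← mul_assoc, aux_key_ident]
    _ = c * (((2:ℝ) ^ n - 1) / 3) ^ α := by rw [step2]
    _ ≤ c * m ^ α := mul_le_mul_of_nonneg_left step1 hc0.le

lemma aux_concave (c ε : ℝ) (hc : 0 ≤ c) :
    ConcaveOn ℝ (Set.Ici 0) (fun x : ℝ => c * x ^ logb 2 goldenRatio + ε) := by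
  have h1 := (Real.concaveOn_rpow aux_alpha_pos.le aux_alpha_lt_one.le).smul hc
  have h2 := h1.add (concaveOn_const ε (convex_Ici (0:ℝ)))
  exact h2

lemma aux_segment (a b : ℝ) (ha : 0 ≤ a) (hab : a < b) (c ε u v : ℝ) (hc : 0 ≤ c)
    (hu : u ≤ c * a ^ logb 2 goldenRatio + ε) (hv : v ≤ c * b ^ logb 2 goldenRatio + ε)
    (x : ℝ) (hx : x ∈ Set.Icc a b) :
    (1 - (x - a)/(b - a)) * u + ((x - a)/(b - a)) * v
      ≤ c * x ^ logb 2 goldenRatio + ε := by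
  obtain ⟨hx1, hx2⟩ := hx
  have hba : 0 < b - a := by linarith
  have hcomb : (1 - (x - a)/(b - a)) * a + ((x - a)/(b - a)) * b = x := by
    field_simp
    ring
  set s := (x - a)/(b - a) with hs
  have hs0 : 0 ≤ s := div_nonneg (by linarith) hba.le
  have hs1 : s ≤ 1 := by rw [hs, div_le_one hba]; linarith
  have hcc := (aux_concave c ε hc).2 (Set.mem_Ici.2 ha) (Set.mem_Ici.2 (by linarith : (0:ℝ) ≤ b))
    (by linarith : 0 ≤ 1 - s) hs0 (by ring)
  simp only [smul_eq_mul] at hcc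
  rw [hcomb] at hcc
  nlinarith [mul_le_mul_of_nonneg_left hu (by linarith : 0 ≤ 1 - s),
    mul_le_mul_of_nonneg_left hv hs0]

lemma aux_sqrt5_lt : Real.sqrt 5 < 2.6 := by
  nlinarith [Real.sq_sqrt (by norm_num : (0:ℝ) ≤ 5), Real.sqrt_nonneg 5]

lemma aux_fib_endpoint (n : ℕ) (hn : 1 ≤ n) (m : ℝ) (hm : ((2:ℝ) ^ n - 1) / 3 ≤ m) :
    Real.sqrt 5 * (Nat.fib n : ℝ) ≤
      goldenRatio ^ (logb 2 3) * m ^ (logb 2 goldenRatio) + 2 * (0.9:ℝ) ^ n := by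
  have hs5 : Real.sqrt 5 ^ 2 = 5 := Real.sq_sqrt (by norm_num)
  have hs5n : 0 ≤ Real.sqrt 5 := Real.sqrt_nonneg 5
  have hs5lt : Real.sqrt 5 < 2.6 := aux_sqrt5_lt
  have hs5gt : 2 < Real.sqrt 5 := by nlinarith
  have h5 : Real.sqrt 5 ≠ 0 := by positivity
  have hfib : Real.sqrt 5 * (Nat.fib n : ℝ) = goldenRatio ^ n - goldenConj ^ n := by
    rw [Real.coe_fib_eq]
    field_simp
  have hψ : -goldenConj ^ n ≤ (0.9:ℝ) ^ n := by
    have h1 : -goldenConj ^ n ≤ |goldenConj ^ n| := neg_le_abs _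
    have h2 : |goldenConj ^ n| = (-goldenConj) ^ n := by
      rw [abs_pow, abs_of_neg goldenConj_neg]
    have h3 : (-goldenConj) ^ n ≤ (0.9:ℝ) ^ n := by
      apply pow_le_pow_left₀
      · simp only [goldenConj]; linarith
      · simp only [goldenConj]; nlinarith
    rw [h2] at h1
    linarith
  have hφ2 : (goldenRatio / 2) ^ n ≤ (0.9:ℝ) ^ n := by
    apply pow_le_pow_left₀
    · positivity
    · simp only [goldenRatio]; nlinarith
  have hend := aux_endpoint n hn m hm
  calc Real.sqrt 5 * (Nat.fib n : ℝ) = goldenRatio ^ n - goldenConj ^ n := hfib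
    _ ≤ goldenRatio ^ n + (0.9:ℝ) ^ n := by linarith
    _ ≤ (goldenRatio ^ (logb 2 3) * m ^ (logb 2 goldenRatio) + (goldenRatio/2) ^ n)
        + (0.9:ℝ) ^ n := by linarith
    _ ≤ goldenRatio ^ (logb 2 3) * m ^ (logb 2 goldenRatio) + 2 * (0.9:ℝ) ^ n := by linarith


/-- For every `ε > 0` there exists `X > 0` such that for all real `x ≥ X`,
`√5 · h(x) ≤ φ^(log₂ 3) · x^(log₂ φ) + ε`, where `φ = (1+√5)/2`. -/
theorem sqrt5_h_le
    (M : ℕ → ℝ) (hM : ∀ n : ℕ, M n = (2 ^ n - (-1) ^ n) / 3)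
    (h : ℝ → ℝ)
    (h01 : ∀ x ∈ Set.Icc (0 : ℝ) 1, h x = x)
    (hlin : ∀ n : ℕ, 2 ≤ n → ∀ x ∈ Set.Icc (M n) (M (n + 1)),
      h x = (Nat.fib n : ℝ) +
        ((Nat.fib (n + 1) : ℝ) - (Nat.fib n : ℝ)) * (x - M n) / (M (n + 1) - M n)) :
    ∀ ε : ℝ, 0 < ε → ∃ X : ℝ, 0 < X ∧ ∀ x : ℝ, X ≤ x →
      Real.sqrt 5 * h x ≤
        ((1 + Real.sqrt 5) / 2) ^ (Real.logb 2 3)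
          * x ^ (Real.logb 2 ((1 + Real.sqrt 5) / 2)) + ε := by
  intro ε hε
  -- bounds on (-1)^n
  have hob : ∀ n : ℕ, ((-1:ℝ)) ^ n ≤ 1 ∧ -1 ≤ ((-1:ℝ)) ^ n := by
    intro n
    rcases neg_one_pow_eq_or ℝ n with hh | hh <;> rw [hh] <;> norm_num
  have hMlb : ∀ n : ℕ, ((2:ℝ) ^ n - 1) / 3 ≤ M n := by
    intro n
    rw [hM]
    have := (hob n).1
    linarith
  have hmono : ∀ n : ℕ, 2 ≤ n → M n < M (n + 1) := by
    intro n hn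
    have h2n : (4:ℝ) ≤ 2 ^ n := by
      calc (4:ℝ) = 2 ^ 2 := by norm_num
      _ ≤ 2 ^ n := pow_le_pow_right₀ (by norm_num) hn
    have hobn := (hob n).2
    rw [hM, hM, pow_succ, pow_succ]
    have : ((-1:ℝ)) ^ n * -1 = -((-1:ℝ)) ^ n := by ring
    rw [this]
    linarith
  -- choose N
  obtain ⟨N₀, hN₀⟩ : ∃ k : ℕ, (0.9:ℝ) ^ k < ε / 2 :=
    exists_pow_lt_of_lt_one (half_pos hε) (by norm_num)
  set N := max N₀ 2 with hN
  have hN2 : 2 ≤ N := le_max_right _ _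
  have hεn : ∀ n : ℕ, N ≤ n → 2 * (0.9:ℝ) ^ n ≤ ε := by
    intro n hn
    have h1 : (0.9:ℝ) ^ n ≤ (0.9:ℝ) ^ N₀ :=
      pow_le_pow_of_le_one (by norm_num) (by norm_num) (le_trans (le_max_left _ _) hn)
    linarith
  refine ⟨M N, ?_, ?_⟩
  · have := hMlb N
    have h2n : (4:ℝ) ≤ 2 ^ N := by
      calc (4:ℝ) = 2 ^ 2 := by norm_num
      _ ≤ 2 ^ N := pow_le_pow_right₀ (by norm_num) hN2
    linarith
  intro x hx
  -- find the segment containing x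
  have hex : ∃ k : ℕ, x < M (N + k + 1) := by
    obtain ⟨j, hj⟩ := pow_unbounded_of_one_lt (3 * x + 1) (by norm_num : (1:ℝ) < 2)
    refine ⟨j, ?_⟩
    have h1 : (2:ℝ) ^ j ≤ 2 ^ (N + j + 1) :=
      pow_le_pow_right₀ (by norm_num) (by omega)
    have := hMlb (N + j + 1)
    linarith
  set k₀ := Nat.find hex with hk₀
  set n := N + k₀ with hn
  have hn2 : 2 ≤ n := le_trans hN2 (by omega)
  have hx2 : x ≤ M (n + 1) := (Nat.find_spec hex).le
  have hx1 : M n ≤ x := by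
    rcases Nat.eq_zero_or_pos k₀ with h0 | hpos
    · rw [hn, h0]
      simpa using hx
    · have := Nat.find_min hex (show k₀ - 1 < k₀ by omega)
      push_neg at this
      have heq : N + (k₀ - 1) + 1 = n := by omega
      rwa [heq] at this
  -- endpoint bounds
  have hab := hmono n hn2
  have ha0 : 0 ≤ M n := by
    have := hMlb n
    have h2n : (4:ℝ) ≤ 2 ^ n := by
      calc (4:ℝ) = 2 ^ 2 := by norm_num
      _ ≤ 2 ^ n := pow_le_pow_right₀ (by norm_num) hn2
    linarith
  have hu : Real.sqrt 5 * (Nat.fib n : ℝ) ≤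
      goldenRatio ^ (logb 2 3) * (M n) ^ (logb 2 goldenRatio) + ε := by
    have := aux_fib_endpoint n (by omega) (M n) (hMlb n)
    have := hεn n (by omega)
    linarith
  have hv : Real.sqrt 5 * (Nat.fib (n+1) : ℝ) ≤
      goldenRatio ^ (logb 2 3) * (M (n+1)) ^ (logb 2 goldenRatio) + ε := by
    have := aux_fib_endpoint (n+1) (by omega) (M (n+1)) (hMlb (n+1))
    have := hεn (n+1) (by omega)
    linarith
  have hseg := aux_segment (M n) (M (n+1)) ha0 hab (goldenRatio ^ (logb 2 3)) ε
    (Real.sqrt 5 * (Nat.fib n : ℝ)) (Real.sqrt 5 * (Nat.fib (n+1) : ℝ))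
    (le_of_lt (rpow_pos_of_pos goldenRatio_pos _)) hu hv x ⟨hx1, hx2⟩
  have hhx := hlin n hn2 x ⟨hx1, hx2⟩
  have hba : M (n+1) - M n ≠ 0 := by linarith
  have hrw : Real.sqrt 5 * h x =
      (1 - (x - M n)/(M (n+1) - M n)) * (Real.sqrt 5 * (Nat.fib n : ℝ))
      + ((x - M n)/(M (n+1) - M n)) * (Real.sqrt 5 * (Nat.fib (n+1) : ℝ)) := by
    rw [hhx]
    field_simp
    ring
  rw [hrw]
  exact hseg
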